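/- Let H be a numerical semigroup and f an automorphism of the large power semigroup P(H). Then min f(X) = min X for every non-empty subset X of H. -/

import Mathlib

open Pointwise

/-- A numerical semigroup: a cofinite additive subsemigroup of `ℕ`. -/
structure NumSgp where
  carrier : Set ℕ
  add_mem : ∀ {a b : ℕ}, a ∈ carrier → b ∈ carrier → a + b ∈ carrier
  cofinite : carrierᶜ.Finite

/-- The large power semigroup of a numerical semigroup `H`: nonempty subsets of `H`
under sumset addition. -/
def PS (H : NumSgp) : Type := {X : Set ℕ // X.Nonempty ∧ X ⊆ H.carrier}

noncomputable instance (H : NumSgp) : Add (PS H) :=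
  ⟨fun X Y => ⟨X.1 + Y.1, X.2.1.add Y.2.1, by
    rintro z ⟨a, ha, b, hb, rfl⟩
    exact H.add_mem (X.2.2 ha) (Y.2.2 hb)⟩⟩

lemma PS.sInf_add {H : NumSgp} (X Y : PS H) :
    sInf (X + Y).1 = sInf X.1 + sInf Y.1 := by
  apply le_antisymm
  · exact Nat.sInf_le (Set.add_mem_add (Nat.sInf_mem X.2.1) (Nat.sInf_mem Y.2.1))
  · apply le_csInf (X.2.1.add Y.2.1)
    rintro b ⟨x, hx, y, hy, rfl⟩
    exact add_le_add (Nat.sInf_le hx) (Nat.sInf_le hy)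

lemma NumSgp.exists_large (H : NumSgp) : ∃ N : ℕ, ∀ n, N ≤ n → n ∈ H.carrier := by
  obtain ⟨M, hM⟩ := H.cofinite.bddAbove
  refine ⟨M + 1, fun n hn => ?_⟩
  by_contra h
  exact absurd (hM h) (by omega)

def NumSgp.S (H : NumSgp) (a : ℕ) (ha : a ∈ H.carrier) : PS H :=
  ⟨{a}, Set.singleton_nonempty a, Set.singleton_subset_iff.2 ha⟩

lemma NumSgp.sInf_S (H : NumSgp) (a : ℕ) (ha : a ∈ H.carrier) :
    sInf (H.S a ha).1 = a := by
  simp [NumSgp.S]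

lemma NumSgp.S_add (H : NumSgp) (a b : ℕ) (ha : a ∈ H.carrier) (hb : b ∈ H.carrier) :
    H.S a ha + H.S b hb = H.S (a + b) (H.add_mem ha hb) := by
  apply Subtype.ext
  show ({a} : Set ℕ) + {b} = {a + b}
  simp [Set.singleton_add_singleton]

/-- `f` preserves the relation "same minimum". -/
lemma key {H : NumSgp} (f : PS H ≃+ PS H) (X Y : PS H) (h : sInf X.1 = sInf Y.1) :
    sInf (f X).1 = sInf (f Y).1 := by
  obtain ⟨N, hN⟩ := H.exists_large
  set Z : PS H := ⟨Set.Ici N, ⟨N, Set.mem_Ici.2 le_rfl⟩, fun n hn => hN n hn⟩ with hZ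
  have addZ : ∀ W : PS H, (W + Z).1 = Set.Ici (sInf W.1 + N) := by
    intro W
    ext m
    constructor
    · rintro ⟨x, hx, z, hz, rfl⟩
      exact add_le_add (Nat.sInf_le hx) hz
    · intro hm
      have ha : sInf W.1 ∈ W.1 := Nat.sInf_mem W.2.1
      simp only [Set.mem_Ici] at hm
      refine ⟨sInf W.1, ha, m - sInf W.1, by show N ≤ m - sInf W.1; omega, ?_⟩
      show sInf W.1 + (m - sInf W.1) = m
      omega
  have hXZ : X + Z = Y + Z := Subtype.ext (by rw [addZ, addZ, h])
  have h2 : f X + f Z = f Y + f Z := by rw [← map_add, ← map_add, hXZ]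
  have h3 := congrArg (fun W : PS H => sInf W.1) h2
  simp only [PS.sInf_add] at h3
  omega

noncomputable def gfun (H : NumSgp) (f : PS H ≃+ PS H) (a : ℕ) (ha : a ∈ H.carrier) : ℕ :=
  sInf ((f (H.S a ha)).1)

lemma gfun_mem {H : NumSgp} (f : PS H ≃+ PS H) {a : ℕ} (ha : a ∈ H.carrier) :
    gfun H f a ha ∈ H.carrier :=
  (f (H.S a ha)).2.2 (Nat.sInf_mem (f (H.S a ha)).2.1)

lemma gfun_inv {H : NumSgp} (f : PS H ≃+ PS H) {a : ℕ} (ha : a ∈ H.carrier) :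
    gfun H f.symm (gfun H f a ha) (gfun_mem f ha) = a := by
  have h1 : sInf (H.S (gfun H f a ha) (gfun_mem f ha)).1 = sInf (f (H.S a ha)).1 := by
    rw [H.sInf_S]; rfl
  have h2 := key f.symm _ _ h1
  rwa [AddEquiv.symm_apply_apply, H.sInf_S] at h2

lemma gfun_add {H : NumSgp} (f : PS H ≃+ PS H) {a b : ℕ}
    (ha : a ∈ H.carrier) (hb : b ∈ H.carrier) :
    gfun H f (a + b) (H.add_mem ha hb) = gfun H f a ha + gfun H f b hb := by
  have h1 : sInf (H.S (a+b) (H.add_mem ha hb)).1 = sInf (H.S a ha + H.S b hb).1 := by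
    rw [H.S_add]
  have h2 := key f _ _ h1
  rw [map_add, PS.sInf_add] at h2
  exact h2

lemma gfun_congr {H : NumSgp} (f : PS H ≃+ PS H) {a b : ℕ} (hab : a = b)
    (ha : a ∈ H.carrier) (hb : b ∈ H.carrier) : gfun H f a ha = gfun H f b hb := by
  subst hab; rfl

lemma NumSgp.smul_mem (H : NumSgp) {a : ℕ} (ha : a ∈ H.carrier) :
    ∀ n : ℕ, (n + 1) * a ∈ H.carrier := by
  intro n
  induction n with
  | zero => simpa using ha
  | succ k ih => exact (by rw [show (k+2)*a = (k+1)*a + a by ring]; exact H.add_mem ih ha)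

lemma gfun_mul {H : NumSgp} (f : PS H ≃+ PS H) {a : ℕ} (ha : a ∈ H.carrier) :
    ∀ n : ℕ, gfun H f ((n + 1) * a) (H.smul_mem ha n) = (n + 1) * gfun H f a ha := by
  intro n
  induction n with
  | zero => rw [gfun_congr f (show (0+1)*a = a by ring) _ ha]; ring
  | succ k ih =>
    rw [gfun_congr f (show (k+2)*a = (k+1)*a + a by ring) _
        (H.add_mem (H.smul_mem ha k) ha), gfun_add f (H.smul_mem ha k) ha, ih]
    ring

lemma gfun_zero {H : NumSgp} (f : PS H ≃+ PS H) (h0 : (0:ℕ) ∈ H.carrier) :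
    gfun H f 0 h0 = 0 := by
  have := gfun_add f h0 h0
  rw [gfun_congr f (show (0:ℕ)+0 = 0 by ring) (H.add_mem h0 h0) h0] at this
  omega

lemma gfun_comm {H : NumSgp} (f : PS H ≃+ PS H) {a b : ℕ}
    (ha : a ∈ H.carrier) (hb : b ∈ H.carrier) :
    a * gfun H f b hb = b * gfun H f a ha := by
  rcases Nat.eq_zero_or_pos a with rfl | hapos
  · rw [gfun_zero f ha]; ring
  rcases Nat.eq_zero_or_pos b with rfl | hbpos
  · rw [gfun_zero f hb]; ring
  obtain ⟨a', rfl⟩ : ∃ a', a = a' + 1 := ⟨a - 1, by omega⟩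
  obtain ⟨b', rfl⟩ : ∃ b', b = b' + 1 := ⟨b - 1, by omega⟩
  have h1 := gfun_mul f hb a'
  have h2 := gfun_mul f ha b'
  have h3 : gfun H f ((a'+1)*(b'+1)) (H.smul_mem hb a')
      = gfun H f ((b'+1)*(a'+1)) (H.smul_mem ha b') :=
    gfun_congr f (by ring) _ _
  omega

/-- Every automorphism of the large power semigroup of a numerical
semigroup preserves minima: `min f(X) = min X`. -/
theorem stmt12 (H : NumSgp) (f : PS H ≃+ PS H) :
    ∀ X : PS H, sInf (f X).1 = sInf X.1 := by
  obtain ⟨N, hN⟩ := H.exists_large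
  have hs : {n : ℕ | n ∈ H.carrier ∧ 0 < n}.Nonempty := ⟨N + 1, hN _ (by omega), by omega⟩
  set a₀ := sInf {n : ℕ | n ∈ H.carrier ∧ 0 < n} with ha₀def
  obtain ⟨ha₀H, ha₀pos⟩ := Nat.sInf_mem hs
  have hleast : ∀ b, b ∈ H.carrier → 0 < b → a₀ ≤ b := fun b hb hbp => Nat.sInf_le ⟨hb, hbp⟩
  have hg := gfun_mem f ha₀H
  have hg' := gfun_mem f.symm ha₀H
  have hgpos : 0 < gfun H f a₀ ha₀H := by
    rcases Nat.eq_zero_or_pos (gfun H f a₀ ha₀H) with h0 | h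
    · have h0H : (0 : ℕ) ∈ H.carrier := h0 ▸ hg
      have hi := gfun_inv f ha₀H
      rw [gfun_congr f.symm h0 hg h0H, gfun_zero f.symm h0H] at hi
      omega
    · exact h
  have hg'pos : 0 < gfun H f.symm a₀ ha₀H := by
    rcases Nat.eq_zero_or_pos (gfun H f.symm a₀ ha₀H) with h0 | h
    · have h0H : (0 : ℕ) ∈ H.carrier := h0 ▸ hg'
      have hi := gfun_inv f.symm ha₀H
      rw [gfun_congr f.symm.symm h0 hg' h0H, gfun_zero f.symm.symm h0H] at hi
      omega
    · exact h
  have h1 : a₀ ≤ gfun H f a₀ ha₀H := hleast _ hg hgpos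
  have h2 : a₀ ≤ gfun H f.symm a₀ ha₀H := hleast _ hg' hg'pos
  have hinv : gfun H f (gfun H f.symm a₀ ha₀H) hg' = a₀ := by
    have hi := gfun_inv f.symm ha₀H
    rwa [AddEquiv.symm_symm] at hi
  have h3 := gfun_comm f ha₀H hg'
  rw [hinv] at h3
  -- h3 : a₀ * a₀ = gfun f.symm a₀ * gfun f a₀
  have h4 : a₀ * gfun H f a₀ ha₀H ≤ a₀ * a₀ := by
    calc a₀ * gfun H f a₀ ha₀H ≤ gfun H f.symm a₀ ha₀H * gfun H f a₀ ha₀H :=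
          Nat.mul_le_mul_right _ h2
      _ = a₀ * a₀ := h3.symm
  have hga : gfun H f a₀ ha₀H = a₀ :=
    le_antisymm (Nat.le_of_mul_le_mul_left h4 ha₀pos) h1
  have hfix : ∀ b (hb : b ∈ H.carrier), gfun H f b hb = b := by
    intro b hb
    have h := gfun_comm f ha₀H hb
    rw [hga, mul_comm b a₀] at h
    exact Nat.eq_of_mul_eq_mul_left ha₀pos h
  intro X
  have haX : sInf X.1 ∈ X.1 := Nat.sInf_mem X.2.1
  have haH : sInf X.1 ∈ H.carrier := X.2.2 haX
  have hkey := key f X (H.S (sInf X.1) haH) (by rw [H.sInf_S])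
  rw [hkey]
  exact hfix _ haH
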